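/- Let f' = x_f ∧ f'₂ ∧ ... ∧ f'_m be an LTL formula in definitional SNF with f'_i = G(α_i) for 2 ≤ i ≤ m and α₁ = x_f, and let ω(f') be the formula constructed with fresh variables x₁,...,x_m as in the MU-dec hardness reduction (with π_i = ⋁_{j≠i} x_j and the mirrored operands ϱ). If ω(f') is minimal unsatisfiable, then f' is satisfiable. -/

import Mathlib

/- LTL in negation normal form (negation only on propositional variables), with
standard semantics over linear time structures `M : ℕ → Set P`. -/

inductive LTL (P : Type) : Type
  | tt : LTL P
  | ff : LTL P
  | var : P → LTL P
  | nvar : P → LTL P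
  | and : LTL P → LTL P → LTL P
  | or : LTL P → LTL P → LTL P
  | next : LTL P → LTL P
  | unt : LTL P → LTL P → LTL P   -- strong until U
  | wunt : LTL P → LTL P → LTL P  -- weak until W
  deriving DecidableEq

def Sat {P : Type} (M : ℕ → Set P) : LTL P → ℕ → Prop
  | .tt, _ => True
  | .ff, _ => False
  | .var p, i => p ∈ M i
  | .nvar p, i => p ∉ M i
  | .and a b, i => Sat M a i ∧ Sat M b i
  | .or a b, i => Sat M a i ∨ Sat M b i
  | .next a, i => Sat M a (i + 1)
  | .unt a b, i => ∃ j, i ≤ j ∧ Sat M b j ∧ ∀ k, i ≤ k → k < j → Sat M a k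
  | .wunt a b, i =>
      (∀ j, i ≤ j → Sat M a j) ∨ (∃ j, i ≤ j ∧ Sat M b j ∧ ∀ k, i ≤ k → k < j → Sat M a k)

def LTL.G {P : Type} (a : LTL P) : LTL P := .wunt a .ff
def LTL.F {P : Type} (a : LTL P) : LTL P := .unt .tt a

def bigAnd {P : Type} (l : List (LTL P)) : LTL P := l.foldr .and .tt
def bigOr {P : Type} (l : List (LTL P)) : LTL P := l.foldr .or .ff

/- Definitional SNF data: an SNF formula `f' = x_f ∧ ⋀_i G(α_i)` is given by the fresh
variable `x_f : P` and a list `cs` of SNF LTL-clauses, each clause being a disjunction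
of operands: literals `l`, `X l`, or `F l`. -/

inductive Op (P : Type) : Type
  | lit : P → Bool → Op P   -- literal (variable, sign)
  | nxt : P → Bool → Op P   -- X l
  | ev : P → Bool → Op P    -- F l
  deriving DecidableEq

def litF {P : Type} (p : P) (b : Bool) : LTL P := if b then .var p else .nvar p

def Op.toLTL {P : Type} : Op P → LTL P
  | .lit p b => litF p b
  | .nxt p b => .next (litF p b)
  | .ev p b => LTL.F (litF p b)

/-- The mirror "ϱ": ϱ l = ∼l, ϱ(X l) = X(∼l), ϱ(F l) = G(∼l). -/
def Op.mirror {P : Type} : Op P → LTL P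
  | .lit p b => litF p (!b)
  | .nxt p b => .next (litF p (!b))
  | .ev p b => LTL.G (litF p (!b))

def Op.varOf {P : Type} : Op P → P
  | .lit p _ => p
  | .nxt p _ => p
  | .ev p _ => p

def LTL.rename {P Q : Type} (r : P → Q) : LTL P → LTL Q
  | .tt => .tt
  | .ff => .ff
  | .var p => .var (r p)
  | .nvar p => .nvar (r p)
  | .and a b => .and (a.rename r) (b.rename r)
  | .or a b => .or (a.rename r) (b.rename r)
  | .next a => .next (a.rename r)
  | .unt a b => .unt (a.rename r) (b.rename r)
  | .wunt a b => .wunt (a.rename r) (b.rename r)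

def clauseF {P : Type} (c : List (Op P)) : LTL P := bigOr (c.map Op.toLTL)

variable {P : Type} [DecidableEq P]

/-- `f' = x_f ∧ ⋀_{2 ≤ i ≤ m} G(α_i)`. -/
def fprime (xf : P) (cs : List (List (Op P))) : LTL P :=
  .and (.var xf) (bigAnd (cs.map fun c => LTL.G (clauseF c)))

/- The reduction formula ω(f') uses fresh variables x₁,…,x_m (m = cs.length + 1,
index 0 corresponding to x₁ and α₁ = x_f); its variable type is `P ⊕ Fin m`. -/

def xvar (cs : List (List (Op P))) (i : Fin (cs.length + 1)) : LTL (P ⊕ Fin (cs.length + 1)) :=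
  .var (Sum.inr i)

def nxvar (cs : List (List (Op P))) (i : Fin (cs.length + 1)) : LTL (P ⊕ Fin (cs.length + 1)) :=
  .nvar (Sum.inr i)

/-- π_i = ⋁_{j ≠ i} x_j. -/
def piF (cs : List (List (Op P))) (i : Fin (cs.length + 1)) : LTL (P ⊕ Fin (cs.length + 1)) :=
  bigOr ((((List.finRange (cs.length + 1)).filter (fun j => j ≠ i))).map (xvar cs))

def alphaF (xf : P) (cs : List (List (Op P))) (i : Fin (cs.length + 1)) :
    LTL (P ⊕ Fin (cs.length + 1)) :=
  if i.val = 0 then .var (Sum.inl xf) else (clauseF (cs.getD (i.val - 1) [])).rename Sum.inl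

def opsOf (cs : List (List (Op P))) (i : Fin (cs.length + 1)) : List (Op P) :=
  if i.val = 0 then [] else cs.getD (i.val - 1) []

/-- The list of conjuncts of ω(f'). -/
def omegaList (xf : P) (cs : List (List (Op P))) : List (LTL (P ⊕ Fin (cs.length + 1))) :=
  [.or (.next (xvar cs 0)) (.or (alphaF xf cs 0) (piF cs 0))]
  ++ ((List.finRange (cs.length + 1)).filter (fun i => i ≠ 0)).map
       (fun i => LTL.G (.or (alphaF xf cs i) (piF cs i)))
  ++ [.or (nxvar cs 0) (.or (.nvar (Sum.inl xf)) (piF cs 0))]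
  ++ ((List.finRange (cs.length + 1)).filter (fun i => i ≠ 0)).flatMap
       (fun i => (opsOf cs i).map
         (fun op => LTL.G (.or (op.mirror.rename Sum.inl) (.or (piF cs i) (nxvar cs i)))))
  ++ ((List.finRange (cs.length + 1)).filter (fun j => j ≠ 0)).map
       (fun j => .or (nxvar cs 0) (nxvar cs j))
  ++ (List.finRange (cs.length + 1)).flatMap
       (fun i => (List.finRange (cs.length + 1)).filterMap
         (fun j => if 0 < i.val ∧ i.val < j.val
                   then some (LTL.G (.or (nxvar cs i) (nxvar cs j))) else none))
  ++ [.or (LTL.G (.next (nxvar cs 0))) (piF cs 0)]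
  ++ [bigOr ((List.finRange (cs.length + 1)).map (xvar cs))]

def omegaF (xf : P) (cs : List (List (Op P))) : LTL (P ⊕ Fin (cs.length + 1)) :=
  bigAnd (omegaList xf cs)

/-- Side conditions guaranteed by the definitional SNF transformation: no two operands
under the same `G` share a propositional variable, and the conjunction of the
`G(α_i)` (without `x_f`) has a model setting `x_f` to FALSE at time 0. -/
def SNFside (xf : P) (cs : List (List (Op P))) : Prop :=
  (∀ c ∈ cs, (c.map Op.varOf).Nodup) ∧
  ∃ M : ℕ → Set P, (∀ c ∈ cs, Sat M (LTL.G (clauseF c)) 0) ∧ xf ∉ M 0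

/-- ω(f') is minimal unsatisfiable: unsatisfiable, but removing (weakening to TRUE)
any single conjunct yields a satisfiable formula. -/
def MUomega (xf : P) (cs : List (List (Op P))) : Prop :=
  (¬ ∃ M, Sat M (omegaF xf cs) 0) ∧
  ∀ g ∈ omegaList xf cs, ∃ M, Sat M (bigAnd ((omegaList xf cs).erase g)) 0

lemma sat_bigAnd {Q : Type} (M : ℕ → Set Q) (l : List (LTL Q)) (i : ℕ) :
    Sat M (bigAnd l) i ↔ ∀ g ∈ l, Sat M g i := by
  induction l with
  | nil => simp [bigAnd, Sat]
  | cons a l ih => simp only [bigAnd, List.foldr] at ih ⊢; simp [Sat, ih]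

lemma sat_bigOr {Q : Type} (M : ℕ → Set Q) (l : List (LTL Q)) (i : ℕ) :
    Sat M (bigOr l) i ↔ ∃ g ∈ l, Sat M g i := by
  induction l with
  | nil => simp [bigOr, Sat]
  | cons a l ih => simp only [bigOr, List.foldr] at ih ⊢; simp [Sat, ih]

lemma sat_G {Q : Type} (M : ℕ → Set Q) (a : LTL Q) (i : ℕ) :
    Sat M (LTL.G a) i ↔ ∀ j, i ≤ j → Sat M a j := by
  simp [LTL.G, Sat]

lemma sat_shift {Q : Type} (φ : LTL Q) (M : ℕ → Set Q) (t : ℕ) :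
    ∀ i, Sat (fun k => M (k + t)) φ i ↔ Sat M φ (i + t) := by
  induction φ with
  | tt => intro i; simp [Sat]
  | ff => intro i; simp [Sat]
  | var p => intro i; simp [Sat]
  | nvar p => intro i; simp [Sat]
  | and a b iha ihb => intro i; simp [Sat, iha, ihb]
  | or a b iha ihb => intro i; simp [Sat, iha, ihb]
  | next a ih => intro i; simp [Sat, ih, Nat.add_right_comm]
  | unt a b iha ihb =>
    intro i
    simp only [Sat, iha, ihb]
    constructor
    · rintro ⟨j, hij, hb, ha⟩
      refine ⟨j + t, by omega, hb, fun k h1 h2 => ?_⟩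
      have := ha (k - t) (by omega) (by omega)
      rwa [Nat.sub_add_cancel (by omega)] at this
    · rintro ⟨j, hij, hb, ha⟩
      refine ⟨j - t, by omega, ?_, fun k h1 h2 => ha (k + t) (by omega) (by omega)⟩
      rwa [Nat.sub_add_cancel (by omega)]
  | wunt a b iha ihb =>
    intro i
    simp only [Sat, iha, ihb]
    constructor
    · rintro (h | ⟨j, hij, hb, ha⟩)
      · left; intro j hj
        have := h (j - t) (by omega)
        rwa [Nat.sub_add_cancel (by omega)] at this
      · right
        refine ⟨j + t, by omega, hb, fun k h1 h2 => ?_⟩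
        have := ha (k - t) (by omega) (by omega)
        rwa [Nat.sub_add_cancel (by omega)] at this
    · rintro (h | ⟨j, hij, hb, ha⟩)
      · left; exact fun j hj => h (j + t) (by omega)
      · right
        refine ⟨j - t, by omega, ?_, fun k h1 h2 => ha (k + t) (by omega) (by omega)⟩
        rwa [Nat.sub_add_cancel (by omega)]

lemma sat_rename {Q R : Type} (r : Q → R) (φ : LTL Q) (M : ℕ → Set R) :
    ∀ i, Sat M (φ.rename r) i ↔ Sat (fun s => {p | r p ∈ M s}) φ i := by
  induction φ <;> intro i <;> simp [LTL.rename, Sat, *]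

lemma sat_pi {P : Type} [DecidableEq P] (cs : List (List (Op P))) (i : Fin (cs.length + 1))
    (M : ℕ → Set (P ⊕ Fin (cs.length + 1))) (t : ℕ) :
    Sat M (piF cs i) t ↔ ∃ j, j ≠ i ∧ Sum.inr j ∈ M t := by
  simp [piF, sat_bigOr, xvar, Sat, List.mem_filter, List.mem_finRange]

/-- If ω(f') is minimal unsatisfiable then f' is satisfiable. -/
theorem stmt13 (xf : P) (cs : List (List (Op P))) (hsnf : SNFside xf cs)
    (hMU : MUomega xf cs) : ∃ M : ℕ → Set P, Sat M (fprime xf cs) 0 := by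
  classical
  obtain ⟨hunsat, hmin⟩ := hMU
  set last : LTL (P ⊕ Fin (cs.length + 1)) :=
    bigOr ((List.finRange (cs.length + 1)).map (xvar cs)) with hlastdef
  have hlast_eq : last = .or (.var (Sum.inr 0))
      (bigOr (((List.finRange cs.length).map Fin.succ).map (xvar cs))) := by
    rw [hlastdef, List.finRange_succ]; rfl
  have hlastmem : last ∈ omegaList xf cs := by simp [omegaList, hlastdef]
  obtain ⟨N, hNsat⟩ := hmin last hlastmem
  have hN : ∀ g ∈ omegaList xf cs, g ≠ last → Sat N g 0 := fun g hg hne =>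
    (sat_bigAnd N _ 0).1 hNsat g ((List.mem_erase_of_ne hne).2 hg)
  -- if all conjuncts hold at time t, contradiction with unsatisfiability
  have hsatOmega : ∀ t, (∀ g ∈ omegaList xf cs, Sat N g t) → False := by
    intro t hall
    refine hunsat ⟨fun k => N (k + t), ?_⟩
    rw [omegaF, sat_bigAnd]
    intro g hg
    have h := (sat_shift g N t 0).2
    rw [Nat.zero_add] at h
    exact h (hall g hg)
  have C0 : ∀ i : Fin (cs.length + 1), Sum.inr i ∉ N 0 := by
    intro i hi
    apply hsatOmega 0
    intro g hg
    by_cases hge : g = last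
    · subst hge
      rw [hlastdef, sat_bigOr]
      exact ⟨xvar cs i, List.mem_map_of_mem (List.mem_finRange i), hi⟩
    · exact hN g hg hge
  have hx0 : ∀ s, Sum.inr (0 : Fin (cs.length + 1)) ∉ N s := by
    intro s hs
    match s with
    | 0 => exact C0 0 hs
    | s + 1 =>
      have h7 : Sat N (.or (LTL.G (.next (nxvar cs 0))) (piF cs 0)) 0 :=
        hN _ (by simp [omegaList]) (by rw [hlast_eq]; simp [LTL.G])
      simp only [Sat, LTL.G, nxvar] at h7
      rcases h7 with (h | ⟨j, _, hf, _⟩) | h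
      · exact h s (Nat.zero_le _) hs
      · exact hf.elim
      · rw [sat_pi] at h
        obtain ⟨j, _, hj⟩ := h
        exact C0 j hj
  have hGsat : ∀ t (φ : LTL (P ⊕ Fin (cs.length + 1))), LTL.G φ ∈ omegaList xf cs →
      Sat N (LTL.G φ) t := by
    intro t φ hmem
    have h := hN _ hmem (by rw [hlast_eq]; simp [LTL.G])
    rw [sat_G] at h ⊢
    exact fun j _ => h j (Nat.zero_le _)
  have key : ∀ t (i : Fin (cs.length + 1)), Sum.inr i ∉ N t := by
    intro t i hi
    match t with
    | 0 => exact C0 i hi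
    | t + 1 =>
      have hi0 : i ≠ 0 := by rintro rfl; exact hx0 _ hi
      have hpi : Sat N (piF cs 0) (t + 1) := (sat_pi cs 0 N (t + 1)).2 ⟨i, hi0, hi⟩
      apply hsatOmega (t + 1)
      intro g hg
      have hgmem := hg
      simp only [omegaList, List.mem_append, List.mem_singleton, List.mem_map,
        List.mem_flatMap, List.mem_filter, List.mem_filterMap, List.mem_finRange,
        Option.ite_none_right_eq_some, Option.some.injEq, true_and] at hg
      rcases hg with ((((((hg | ⟨j, hj, rfl⟩) | hg) | ⟨j, hj, op, hop, rfl⟩) | ⟨j, hj, rfl⟩)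
        | ⟨j, j', hjj, rfl⟩) | hg) | hg
      · subst hg; exact Or.inr (Or.inr hpi)
      · exact hGsat _ _ hgmem
      · subst hg; exact Or.inl (hx0 _)
      · exact hGsat _ _ hgmem
      · exact Or.inl (hx0 _)
      · exact hGsat _ _ hgmem
      · subst hg; exact Or.inr hpi
      · subst hg
        rw [sat_bigOr]
        exact ⟨xvar cs i, List.mem_map_of_mem (List.mem_finRange i), hi⟩
  -- xf holds at time 0 in N
  have hxf : Sum.inl xf ∈ N 0 := by
    have h1 : Sat N (.or (.next (xvar cs 0)) (.or (alphaF xf cs 0) (piF cs 0))) 0 :=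
      hN _ (by simp [omegaList]) (by rw [hlast_eq]; simp)
    simp only [Sat, xvar, alphaF, Fin.val_zero, if_pos rfl] at h1
    rcases h1 with h | h | h
    · exact absurd h (key 1 0)
    · exact h
    · rw [sat_pi] at h
      obtain ⟨j, _, hj⟩ := h
      exact absurd hj (key 0 j)
  refine ⟨fun s => {p | Sum.inl p ∈ N s}, ?_⟩
  rw [fprime]
  refine ⟨hxf, ?_⟩
  rw [sat_bigAnd]
  intro g hg
  simp only [List.mem_map] at hg
  obtain ⟨c, hc, rfl⟩ := hg
  obtain ⟨k, hk, hck⟩ := List.mem_iff_getElem.1 hc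
  have hmem : LTL.G (.or (alphaF xf cs ⟨k + 1, by omega⟩) (piF cs ⟨k + 1, by omega⟩))
      ∈ omegaList xf cs := by
    simp only [omegaList, List.mem_append, List.mem_map, List.mem_filter, List.mem_finRange,
      true_and]
    refine Or.inl (Or.inl (Or.inl (Or.inl (Or.inl (Or.inl (Or.inr ⟨⟨k + 1, by omega⟩, ?_, rfl⟩))))))
    simp [Fin.ext_iff]
  have h := hGsat 0 _ hmem
  rw [sat_G] at h ⊢
  intro j _
  have hj := h j (Nat.zero_le _)
  simp only [Sat] at hj
  have halpha : alphaF xf cs ⟨k + 1, by omega⟩ = (clauseF c).rename Sum.inl := by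
    simp only [alphaF]
    rw [if_neg (by simp)]
    congr 1
    simp only [Nat.add_sub_cancel]
    rw [List.getD_eq_getElem _ _ hk, hck]
  rcases hj with hj | hj
  · rw [halpha, sat_rename] at hj
    exact hj
  · rw [sat_pi] at hj
    obtain ⟨l, _, hl⟩ := hj
    exact absurd hl (key j l)
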